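/- arXiv:2203.01648 — 2 statements merged into one kernel-verified Lean document; each statement's English description precedes it below -/
import Mathlib

section
/- Let δ > 0 and let u, s be as follows: u(t) = −log(1/δ + 1 − e^{−t}) and s(t) = ((1 + 1/δ)t + (1/δ)(1 + 1/δ)) / (1/δ + 1 − e^{−t}) − 1 on (0, +∞). Then u''(t)·s(t) − s''(t) > 0 for all t > 0, and moreover (s(t) + s'(t)² / (u''(t)s(t) − s''(t))) · e^{u(t) − t} = 1 for all t > 0. -/
/-- For `δ > 0`, with `u t = -log (1/δ + 1 - e^{-t})` and
`s t = ((1 + 1/δ) t + (1/δ)(1 + 1/δ)) / (1/δ + 1 - e^{-t}) - 1` on `(0,∞)`,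
one has `u'' t * s t - s'' t > 0` for all `t > 0`, and moreover
`(s t + (s' t)^2 / (u'' t * s t - s'' t)) * e^{u t - t} = 1` for all `t > 0`. -/
theorem stmt_4 (δ : ℝ) (hδ : 0 < δ) (u s : ℝ → ℝ)
    (hu : ∀ t, u t = -Real.log (1/δ + 1 - Real.exp (-t)))
    (hs : ∀ t, s t = ((1 + 1/δ) * t + (1/δ) * (1 + 1/δ)) / (1/δ + 1 - Real.exp (-t)) - 1) :
    (∀ t > (0:ℝ), 0 < deriv (deriv u) t * s t - deriv (deriv s) t) ∧
      ∀ t > (0:ℝ),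
        (s t + (deriv s t)^2 / (deriv (deriv u) t * s t - deriv (deriv s) t)) *
          Real.exp (u t - t) = 1 := by
  have ha : 0 < 1/δ := by positivity
  set a := 1/δ with ha'
  have hufun : u = fun y => -Real.log (a + 1 - Real.exp (-y)) := funext hu
  have hsfun : s = fun y => ((1 + a) * y + a * (1 + a)) / (a + 1 - Real.exp (-y)) - 1 :=
    funext hs
  have hG : ∀ x : ℝ, 0 < x → 0 < a + 1 - Real.exp (-x) := by
    intro x hx
    have h1 : Real.exp (-x) < 1 := by
      rw [Real.exp_lt_one_iff]; linarith
    linarith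
  have hgd : ∀ x : ℝ, HasDerivAt (fun y => a + 1 - Real.exp (-y)) (Real.exp (-x)) x := by
    intro x
    have h3 := (((hasDerivAt_id x).neg).exp).const_sub (a+1)
    simpa using h3
  have hnd : ∀ x : ℝ, HasDerivAt (fun y => (1+a)*y + a*(1+a)) (1+a) x := by
    intro x
    have h := ((hasDerivAt_id x).const_mul (1+a)).add_const (a*(1+a))
    simpa using h
  have hed : ∀ x : ℝ, HasDerivAt (fun y => Real.exp (-y)) (-Real.exp (-x)) x := by
    intro x
    have h := ((hasDerivAt_id x).neg).exp
    simpa using h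
  have hdu : ∀ x : ℝ, 0 < x → deriv u x = -(Real.exp (-x) / (a + 1 - Real.exp (-x))) := by
    intro x hx
    have h := ((hgd x).log (ne_of_gt (hG x hx))).neg
    rw [hufun]
    exact h.deriv
  have hds : ∀ x : ℝ, 0 < x →
      deriv s x = ((1+a)*(a+1-Real.exp (-x)) - ((1+a)*x + a*(1+a))*Real.exp (-x))
        / (a+1-Real.exp (-x))^2 := by
    intro x hx
    have h := (((hnd x).div (hgd x) (ne_of_gt (hG x hx)))).sub_const 1
    rw [hsfun]
    exact h.deriv
  have hdu2 : ∀ t : ℝ, 0 < t → deriv (deriv u) t =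
      -(((-Real.exp (-t))*(a+1-Real.exp (-t)) - Real.exp (-t)*Real.exp (-t))
        /(a+1-Real.exp (-t))^2) := by
    intro t ht
    have heq : deriv u =ᶠ[nhds t] (fun x => -(Real.exp (-x)/(a+1-Real.exp (-x)))) := by
      filter_upwards [isOpen_Ioi.mem_nhds ht] with x hx
      exact hdu x hx
    rw [heq.deriv_eq]
    have h := (((hed t).div (hgd t) (ne_of_gt (hG t ht)))).neg
    exact h.deriv
  have hds2 : ∀ t : ℝ, 0 < t → deriv (deriv s) t =
      (((1+a)*t + a*(1+a))*Real.exp (-t)*(a+1-Real.exp (-t))^2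
        - ((1+a)*(a+1-Real.exp (-t)) - ((1+a)*t + a*(1+a))*Real.exp (-t))
          *(2*(a+1-Real.exp (-t))*Real.exp (-t)))
        /(a+1-Real.exp (-t))^4 := by
    intro t ht
    have heq : deriv s =ᶠ[nhds t] (fun x =>
        ((1+a)*(a+1-Real.exp (-x)) - ((1+a)*x + a*(1+a))*Real.exp (-x))
          / (a+1-Real.exp (-x))^2) := by
      filter_upwards [isOpen_Ioi.mem_nhds ht] with x hx
      exact hds x hx
    rw [heq.deriv_eq]
    have hF : HasDerivAt (fun x => (1+a)*(a+1-Real.exp (-x)) - ((1+a)*x + a*(1+a))*Real.exp (-x))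
        ((1+a)*Real.exp (-t) - ((1+a)*Real.exp (-t) + ((1+a)*t + a*(1+a))*(-Real.exp (-t)))) t :=
      ((hgd t).const_mul (1+a)).sub ((hnd t).mul (hed t))
    have hG2 : HasDerivAt (fun x => (a+1-Real.exp (-x))^2)
        ((2:ℕ) * (a+1-Real.exp (-t))^(2-1) * Real.exp (-t)) t := (hgd t).pow 2
    have h := hF.div hG2 (pow_ne_zero 2 (ne_of_gt (hG t ht)))
    erw [h.deriv]
    have hGp := hG t ht
    rw [div_eq_div_iff (ne_of_gt (pow_pos (pow_pos hGp 2) 2)) (ne_of_gt (pow_pos hGp 4))]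
    ring
  have hN : ∀ t : ℝ, 0 < t → 0 < a + 1 - (t+a+1)*Real.exp (-t) := by
    intro t ht
    have h1 : t + 1 < Real.exp t := Real.add_one_lt_exp (ne_of_gt ht)
    have h2 : 1 < Real.exp t := by nlinarith
    have h3 : t + a + 1 < (a+1)*Real.exp t := by nlinarith
    have hmul : Real.exp (-t) * Real.exp t = 1 := by
      rw [← Real.exp_add]; simp
    have h5 := mul_lt_mul_of_pos_right h3 (Real.exp_pos (-t))
    nlinarith [Real.exp_pos (-t), h5, hmul]
  have hkey : ∀ t : ℝ, 0 < t → deriv (deriv u) t * s t - deriv (deriv s) t =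
      (1+a)*Real.exp (-t)*(a+1-(t+a+1)*Real.exp (-t))/(a+1-Real.exp (-t))^3 := by
    intro t ht
    rw [hdu2 t ht, hds2 t ht, hs t]
    have hGne : (a+1-Real.exp (-t)) ≠ 0 := ne_of_gt (hG t ht)
    field_simp
    ring
  constructor
  · intro t ht
    rw [hkey t ht]
    have hE := Real.exp_pos (-t)
    exact div_pos (mul_pos (mul_pos (by positivity) hE) (hN t ht)) (pow_pos (hG t ht) 3)
  · intro t ht
    have hGpos := hG t ht
    have hGne : (a+1-Real.exp (-t)) ≠ 0 := ne_of_gt hGpos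
    have hNne : (a+1-(t+a+1)*Real.exp (-t)) ≠ 0 := ne_of_gt (hN t ht)
    have hEne : Real.exp (-t) ≠ 0 := (Real.exp_pos (-t)).ne'
    have hane : (1+a:ℝ) ≠ 0 := by positivity
    have hexpu : Real.exp (u t - t) = Real.exp (-t) / (a+1-Real.exp (-t)) := by
      rw [hu t, Real.exp_sub, Real.exp_neg (Real.log (a+1-Real.exp (-t))), Real.exp_log hGpos,
        Real.exp_neg t]
      ring
    rw [hkey t ht, hds t ht, hs t, hexpu]
    generalize hNdef : a+1-(t+a+1)*Real.exp (-t) = N at hNne ⊢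
    generalize hGdef : a+1-Real.exp (-t) = G at hGne ⊢
    field_simp
    subst hNdef hGdef
    ring
end

section
/- Let δ > 0 and s(t) = ((1 + 1/δ)t + (1/δ)(1 + 1/δ)) / (1/δ + 1 − e^{−t}) − 1 on (0, +∞). Then s(t) ≥ 1/δ and s'(t) > 0 for all t > 0. -/
/-- For `δ > 0` and `s t = ((1 + 1/δ) t + (1/δ)(1 + 1/δ)) / (1/δ + 1 - e^{-t}) - 1`
on `(0,∞)`, one has `s t ≥ 1/δ` and `s' t > 0` for all `t > 0`. -/
theorem stmt_5 (δ : ℝ) (hδ : 0 < δ) (s : ℝ → ℝ)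
    (hs : ∀ t, s t = ((1 + 1/δ) * t + (1/δ) * (1 + 1/δ)) / (1/δ + 1 - Real.exp (-t)) - 1) :
    ∀ t > (0:ℝ), 1/δ ≤ s t ∧ 0 < deriv s t := by
  intro t ht
  have ha : 0 < 1/δ := by positivity
  set a := 1/δ with hA
  have hE0 : 0 < Real.exp (-t) := Real.exp_pos _
  have he : Real.exp (-t) < 1 := by
    rw [Real.exp_lt_one_iff]; linarith
  have hD : 0 < a + 1 - Real.exp (-t) := by linarith
  have hD' : 0 < 1/δ + 1 - Real.exp (-t) := hD
  have hne : a + 1 - Real.exp (-t) ≠ 0 := ne_of_gt hD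
  have hexpge : 1 - t ≤ Real.exp (-t) := by
    have := Real.add_one_le_exp (-t); linarith
  have hmul : Real.exp (-t) * Real.exp t = 1 := by
    rw [← Real.exp_add]; simp
  have hexp : t + 1 < Real.exp t := Real.add_one_lt_exp (ne_of_gt ht)
  have hEt : Real.exp (-t) * (1 + t) < 1 := by
    calc Real.exp (-t) * (1 + t) < Real.exp (-t) * Real.exp t := by
          apply mul_lt_mul_of_pos_left _ hE0; linarith
      _ = 1 := hmul
  constructor
  · rw [hs t]
    rw [le_sub_iff_add_le, le_div_iff₀ hD']
    nlinarith [hexpge, ha]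
  · have hfun : s = fun t => ((1 + a) * t + a * (1 + a)) / (a + 1 - Real.exp (-t)) - 1 :=
      funext hs
    have h1 : HasDerivAt (fun t : ℝ => (1 + a) * t + a * (1 + a)) (1 + a) t := by
      simpa using ((hasDerivAt_id t).const_mul (1 + a)).add_const (a * (1 + a))
    have h2 : HasDerivAt (fun t : ℝ => a + 1 - Real.exp (-t)) (Real.exp (-t)) t := by
      have hneg : HasDerivAt (fun t : ℝ => -t) (-1) t := (hasDerivAt_id t).neg
      have := (Real.hasDerivAt_exp (-t)).comp t hneg
      have h3 : HasDerivAt (fun t : ℝ => a + 1 - Real.exp (-t))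
          (0 - Real.exp (-t) * (-1)) t := (hasDerivAt_const t (a + 1)).sub this
      simpa using h3
    have hd : HasDerivAt (fun t => ((1 + a) * t + a * (1 + a)) / (a + 1 - Real.exp (-t)) - 1) _ t :=
      ((h1.div h2 hne).sub_const 1)
    rw [hfun, hd.deriv]
    apply div_pos _ (by positivity)
    nlinarith [mul_lt_mul_of_pos_left hEt (by positivity : (0:ℝ) < 1 + a),
      mul_pos (by positivity : (0:ℝ) < 1 + a) (mul_pos ha (sub_pos.mpr he))]
end
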